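/- Let x and y be adjacent vertices of G and let s ≥ 1. Then the set T'_s(x,y) = { z ∈ V : d(x,z) = s and d(y,z) = s-1 } (the vertices at distance s from x whose connecting path to x passes through y) is finite of cardinality 2^(s-1). -/

import Mathlib

open SimpleGraph Set

section helpers

variable {V : Type*} {G : SimpleGraph V}

private lemma concat_isPath' {u v w : V} {p : G.Walk u v} (hp : p.IsPath)
    (h : G.Adj v w) (hw : w ∉ p.support) : (p.concat h).IsPath := by
  rw [← Walk.isPath_reverse_iff, Walk.reverse_concat]
  exact ((Walk.isPath_reverse_iff p).mpr hp).cons (by simpa [Walk.support_reverse] using hw)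

/-- In a connected graph, a vertex at positive distance from `x` has a neighbour
strictly closer to `x`. -/
private lemma exists_closer (hconn : G.Connected) {x z : V} (h : G.dist x z ≠ 0) :
    ∃ w, G.Adj w z ∧ G.dist x w + 1 = G.dist x z := by
  obtain ⟨p, hp⟩ := hconn.exists_walk_length_eq_dist z x
  have hzx : G.dist z x = G.dist x z := SimpleGraph.dist_comm
  cases p with
  | nil => simp [hzx] at hp; exact absurd SimpleGraph.dist_self h
  | cons hadj q =>
    rename_i w
    have h1 : G.dist x w ≤ q.length := by
      rw [SimpleGraph.dist_comm]; exact SimpleGraph.dist_le q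
    have h2 : q.length + 1 = G.dist x z := by
      simpa [hzx] using hp
    have h3 : G.dist x z ≤ G.dist x w + G.dist w z := hconn.dist_triangle
    have h4 : G.dist w z = 1 := SimpleGraph.dist_eq_one_iff_adj.mpr hadj.symm
    exact ⟨w, hadj.symm, by omega⟩

/-- In a tree, distances to adjacent vertices differ by exactly one. -/
private lemma adj_dist_cases (hconn : G.Connected) (hacyc : G.IsAcyclic) (x : V) {w z : V}
    (h : G.Adj w z) : G.dist x z = G.dist x w + 1 ∨ G.dist x w = G.dist x z + 1 := by
  have hwz : G.dist w z = 1 := SimpleGraph.dist_eq_one_iff_adj.mpr h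
  have hzw : G.dist z w = 1 := SimpleGraph.dist_eq_one_iff_adj.mpr h.symm
  have h1 : G.dist x z ≤ G.dist x w + 1 := hwz ▸ hconn.dist_triangle
  have h2 : G.dist x w ≤ G.dist x z + 1 := hzw ▸ hconn.dist_triangle
  have hne : G.dist x w ≠ G.dist x z := by
    intro heq
    classical
    obtain ⟨p, hp, hl⟩ := hconn.exists_path_of_dist x z
    by_cases hw : w ∈ p.support
    · have t1 : G.dist x w ≤ (p.takeUntil w hw).length := SimpleGraph.dist_le _
      have t2 : G.dist w z ≤ (p.dropUntil w hw).length := SimpleGraph.dist_le _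
      have t3 := congr_arg Walk.length (p.take_spec hw)
      rw [Walk.length_append] at t3
      omega
    · have hq : (p.concat h.symm).IsPath := concat_isPath' hp h.symm hw
      obtain ⟨r, hr, hrl⟩ := hconn.exists_path_of_dist x w
      have := hacyc.path_unique ⟨p.concat h.symm, hq⟩ ⟨r, hr⟩
      have hlen : (p.concat h.symm).length = r.length :=
        congrArg (fun q : G.Path x w => q.1.length) this
      rw [Walk.length_concat] at hlen
      omega
  omega

/-- In a tree, the closer neighbour is unique. -/
private lemma closer_unique (hconn : G.Connected) (hacyc : G.IsAcyclic) {x z w₁ w₂ : V}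
    (h₁ : G.Adj w₁ z) (h₂ : G.Adj w₂ z)
    (d₁ : G.dist x w₁ + 1 = G.dist x z) (d₂ : G.dist x w₂ + 1 = G.dist x z) : w₁ = w₂ := by
  obtain ⟨p₁, hp₁, hl₁⟩ := hconn.exists_path_of_dist x w₁
  obtain ⟨p₂, hp₂, hl₂⟩ := hconn.exists_path_of_dist x w₂
  have e₁ : (p₁.concat h₁).length = G.dist x z := by rw [Walk.length_concat, hl₁, d₁]
  have e₂ : (p₂.concat h₂).length = G.dist x z := by rw [Walk.length_concat, hl₂, d₂]
  have hq₁ : (p₁.concat h₁).IsPath := Walk.isPath_of_length_eq_dist _ e₁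
  have hq₂ : (p₂.concat h₂).IsPath := Walk.isPath_of_length_eq_dist _ e₂
  have heq := hacyc.path_unique ⟨p₁.concat h₁, hq₁⟩ ⟨p₂.concat h₂, hq₂⟩
  rw [Subtype.ext_iff] at heq
  obtain ⟨hv, -⟩ := Walk.concat_inj heq
  exact hv

/-- In a `3`-regular tree, a vertex at distance `s ≥ 1` from `x` has exactly two
neighbours at distance `s + 1` from `x`. -/
private lemma two_farther (hconn : G.Connected) (hacyc : G.IsAcyclic)
    (hreg : ∀ v : V, (G.neighborSet v).ncard = 3) (x : V) {w : V} {s : ℕ}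
    (hs : 1 ≤ s) (hw : G.dist x w = s) :
    {z | G.Adj w z ∧ G.dist x z = s + 1}.Finite ∧
    {z | G.Adj w z ∧ G.dist x z = s + 1}.ncard = 2 := by
  have hNfin : (G.neighborSet w).Finite := by
    by_contra hinf
    have := Set.Infinite.ncard (s := G.neighborSet w) hinf
    rw [hreg w] at this; omega
  set C : Set V := {z | G.Adj w z ∧ G.dist x z + 1 = s} with hC
  set F : Set V := {z | G.Adj w z ∧ G.dist x z = s + 1} with hF
  have hCsub : C ⊆ G.neighborSet w := fun z hz => hz.1
  have hFsub : F ⊆ G.neighborSet w := fun z hz => hz.1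
  have hCfin : C.Finite := hNfin.subset hCsub
  have hFfin : F.Finite := hNfin.subset hFsub
  refine ⟨hFfin, ?_⟩
  obtain ⟨u, hu, hud⟩ := exists_closer hconn (x := x) (z := w) (by omega)
  have huC : u ∈ C := ⟨hu.symm, by omega⟩
  have hCsingle : C = {u} := by
    apply Set.eq_singleton_iff_unique_mem.mpr
    refine ⟨huC, fun c hc => ?_⟩
    obtain ⟨hc1, hc2⟩ := hc
    exact closer_unique hconn hacyc (x := x) hc1.symm hu (by omega) (by omega)
  have hsplit : G.neighborSet w = C ∪ F := by
    ext z
    simp only [mem_neighborSet, Set.mem_union, hC, hF, Set.mem_setOf_eq]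
    constructor
    · intro hz
      rcases adj_dist_cases hconn hacyc x hz with h | h
      · exact Or.inr ⟨hz, by omega⟩
      · exact Or.inl ⟨hz, by omega⟩
    · rintro (⟨h, -⟩ | ⟨h, -⟩) <;> exact h
  have hdisj : Disjoint C F := by
    rw [Set.disjoint_left]
    rintro z ⟨-, hz1⟩ ⟨-, hz2⟩
    omega
  have := hreg w
  rw [hsplit, Set.ncard_union_eq hdisj hCfin hFfin, hCsingle, Set.ncard_singleton] at this
  omega

end helpers

/-- In a 3-regular tree `G`, for adjacent vertices `x`, `y` and `s ≥ 1`, the set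
`T'_s(x,y)` of vertices `z` with `d(x,z) = s` and `d(y,z) = s-1` (the vertices at distance
`s` from `x` whose connecting path to `x` passes through `y`) is finite of
cardinality `2^(s-1)`. -/
theorem card_T' (V : Type*) (G : SimpleGraph V) (hconn : G.Connected)
    (hacyc : G.IsAcyclic) (hreg : ∀ v : V, (G.neighborSet v).ncard = 3)
    (x y : V) (hxy : G.Adj x y) (s : ℕ) (hs : 1 ≤ s) :
    {z : V | G.dist x z = s ∧ G.dist y z = s - 1}.Finite ∧
    {z : V | G.dist x z = s ∧ G.dist y z = s - 1}.ncard = 2 ^ (s - 1) := by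
  classical
  have hdxy : G.dist x y = 1 := SimpleGraph.dist_eq_one_iff_adj.mpr hxy
  have hdyx : G.dist y x = 1 := SimpleGraph.dist_eq_one_iff_adj.mpr hxy.symm
  induction s, hs using Nat.le_induction with
  | base =>
    have hset : {z : V | G.dist x z = 1 ∧ G.dist y z = 1 - 1} = {y} := by
      ext z
      simp only [Set.mem_setOf_eq, Set.mem_singleton_iff]
      constructor
      · rintro ⟨-, h0⟩
        exact ((hconn.dist_eq_zero_iff).mp (by omega)).symm
      · rintro rfl
        exact ⟨hdxy, SimpleGraph.dist_self⟩
    rw [hset]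
    exact ⟨Set.finite_singleton y, by simp⟩
  | succ s hs1 IH =>
    obtain ⟨hfin, hcard⟩ := IH
    set A : Set V := {z : V | G.dist x z = s ∧ G.dist y z = s - 1} with hA
    set B : Set V := {z : V | G.dist x z = s + 1 ∧ G.dist y z = (s + 1) - 1} with hB
    have hkey : B = ⋃ w ∈ A, {z | G.Adj w z ∧ G.dist x z = s + 1} := by
      ext z
      simp only [hB, hA, Set.mem_setOf_eq, Set.mem_iUnion, exists_prop]
      constructor
      · rintro ⟨hxz, hyz⟩
        have hyz' : G.dist y z = s := by simpa using hyz
        obtain ⟨w, hw, hwd⟩ := exists_closer hconn (x := y) (z := z) (by omega)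
        have h1 : G.dist x w ≤ G.dist x y + G.dist y w := hconn.dist_triangle
        have h2 : G.dist x z ≤ G.dist x w + G.dist w z := hconn.dist_triangle
        have h3 : G.dist w z = 1 := SimpleGraph.dist_eq_one_iff_adj.mpr hw
        have hxw : G.dist x w = s := by omega
        exact ⟨w, ⟨hxw, by omega⟩, hw, hxz⟩
      · rintro ⟨w, ⟨hxw, hyw⟩, hwz, hxz⟩
        refine ⟨hxz, ?_⟩
        have h1 : G.dist y z ≤ G.dist y w + G.dist w z := hconn.dist_triangle
        have h2 : G.dist x z ≤ G.dist x y + G.dist y z := hconn.dist_triangle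
        have h3 : G.dist w z = 1 := SimpleGraph.dist_eq_one_iff_adj.mpr hwz
        omega
    have hpiece : ∀ w ∈ A, {z | G.Adj w z ∧ G.dist x z = s + 1}.Finite ∧
        {z | G.Adj w z ∧ G.dist x z = s + 1}.ncard = 2 := fun w hw =>
      two_farther hconn hacyc hreg x hs1 hw.1
    set FA := hfin.toFinset with hFA
    have hpfin : ∀ w : V, {z | G.Adj w z ∧ G.dist x z = s + 1}.Finite := by
      intro w
      have hNfin : (G.neighborSet w).Finite := by
        by_contra hinf
        have := Set.Infinite.ncard (s := G.neighborSet w) hinf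
        rw [hreg w] at this; omega
      exact hNfin.subset fun z hz => hz.1
    set g : V → Finset V := fun w => (hpfin w).toFinset with hg
    have hBeq : B = ↑(FA.biUnion g) := by
      rw [hkey]
      ext z
      simp only [Finset.coe_biUnion, Set.mem_iUnion, Finset.mem_coe, hFA, hg,
        Set.Finite.mem_toFinset, exists_prop, Set.mem_setOf_eq]
    have hdisj : ∀ w₁ ∈ FA, ∀ w₂ ∈ FA, w₁ ≠ w₂ → Disjoint (g w₁) (g w₂) := by
      intro w₁ h₁ w₂ h₂ hne
      rw [hFA, Set.Finite.mem_toFinset] at h₁ h₂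
      rw [Finset.disjoint_left]
      intro z hz₁ hz₂
      rw [hg, Set.Finite.mem_toFinset] at hz₁ hz₂
      exact hne (closer_unique hconn hacyc (x := x) hz₁.1 hz₂.1
        (by have ha := h₁.1; have hb := hz₁.2; omega)
        (by have ha := h₂.1; have hb := hz₂.2; omega))
    have hcardB : (FA.biUnion g).card = 2 ^ s := by
      rw [Finset.card_biUnion hdisj]
      have hgc : ∀ w ∈ FA, (g w).card = 2 := by
        intro w hw
        rw [hFA, Set.Finite.mem_toFinset] at hw
        rw [hg, ← Set.ncard_eq_toFinset_card _ (hpfin w)]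
        exact (hpiece w hw).2
      rw [Finset.sum_congr rfl hgc, Finset.sum_const, smul_eq_mul, hFA,
        ← Set.ncard_eq_toFinset_card _ hfin, hcard]
      have h1 : s - 1 + 1 = s := by omega
      rw [← pow_succ, h1]
    refine ⟨hBeq ▸ (FA.biUnion g).finite_toSet, ?_⟩
    rw [hBeq, Set.ncard_coe_finset, hcardB, Nat.add_sub_cancel]
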